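/- Let L̂ be a symmetric positive semidefinite N×N Laplacian matrix of a connected undirected graph with smallest nonzero eigenvalue λ₂. Then for any vector ξ with all positive entries and any nonzero x ∈ ℝ^N with ξ^T x = 0, one has (x^T L̂ x)/(x^T x) > λ₂/N. -/

import Mathlib

open Matrix


lemma spectral_bound_aux (N : ℕ) (L : Matrix (Fin N) (Fin N) ℝ)
    (hH : L.IsHermitian) (lam2 : ℝ)
    (hlb : ∀ μ : ℝ, μ ≠ 0 → (∃ w : Fin N → ℝ, w ≠ 0 ∧ L *ᵥ w = μ • w) → lam2 ≤ μ)
    (hker : ∀ v : Fin N → ℝ, L *ᵥ v = 0 → ∃ c : ℝ, v = fun _ => c)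
    (y : Fin N → ℝ) (hy : ∑ i, y i = 0) :
    lam2 * (y ⬝ᵥ y) ≤ y ⬝ᵥ (L *ᵥ y) := by
  classical
  set b := hH.eigenvectorBasis with hb
  set lam := hH.eigenvalues with hlamdef
  have hinner : ∀ a c : EuclideanSpace ℝ (Fin N),
      (inner ℝ a c : ℝ) = (a : Fin N → ℝ) ⬝ᵥ (c : Fin N → ℝ) := by
    intro a c
    simp [PiLp.inner_apply, dotProduct, RCLike.inner_apply, mul_comm]
  set d : Fin N → ℝ := fun i => ((b i : Fin N → ℝ)) ⬝ᵥ y with hd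
  have hsymT : Lᵀ = L := by
    have := hH
    unfold Matrix.IsHermitian at this
    simpa using this
  have hvecMul : ∀ v : Fin N → ℝ, v ᵥ* L = L *ᵥ v := by
    intro v
    rw [← hsymT, vecMul_transpose, hsymT]
  have hLb : ∀ i, L *ᵥ (b i : Fin N → ℝ) = lam i • (b i : Fin N → ℝ) :=
    fun i => hH.mulVec_eigenvectorBasis i
  have h2 : ∀ i, ((b i : Fin N → ℝ)) ⬝ᵥ (L *ᵥ y) = lam i * d i := by
    intro i
    rw [dotProduct_mulVec, hvecMul, hLb i, smul_dotProduct]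
    rfl
  let z : EuclideanSpace ℝ (Fin N) := WithLp.toLp 2 y
  let w : EuclideanSpace ℝ (Fin N) := WithLp.toLp 2 (L *ᵥ y)
  have e1 : y ⬝ᵥ (L *ᵥ y) = ∑ i, lam i * d i ^ 2 := by
    have := b.sum_inner_mul_inner z w
    rw [hinner z w] at this
    rw [show (y ⬝ᵥ (L *ᵥ y)) = (z : Fin N → ℝ) ⬝ᵥ (w : Fin N → ℝ) from rfl, ← this]
    apply Finset.sum_congr rfl
    intro i _
    rw [hinner, hinner]
    rw [show ((w : Fin N → ℝ)) = L *ᵥ y from rfl, h2 i,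
      show ((z : Fin N → ℝ)) = y from rfl, dotProduct_comm]
    simp only [hd]
    ring
  have e2 : y ⬝ᵥ y = ∑ i, d i ^ 2 := by
    have := b.sum_inner_mul_inner z z
    rw [hinner z z] at this
    rw [show (y ⬝ᵥ y) = (z : Fin N → ℝ) ⬝ᵥ (z : Fin N → ℝ) from rfl, ← this]
    apply Finset.sum_congr rfl
    intro i _
    rw [hinner, hinner, show ((z : Fin N → ℝ)) = y from rfl, dotProduct_comm]
    simp only [hd]
    ring
  rw [e1, e2, Finset.mul_sum]
  apply Finset.sum_le_sum
  intro i _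
  by_cases hli : lam i = 0
  · have hk : L *ᵥ (b i : Fin N → ℝ) = 0 := by
      rw [hLb i, hli, zero_smul]
    obtain ⟨c, hc⟩ := hker _ hk
    have hdi : d i = 0 := by
      rw [hd]
      simp only [hc, dotProduct]
      rw [← Finset.mul_sum, hy, mul_zero]
    rw [hdi]
    simp
  · have hge : lam2 ≤ lam i := by
      apply hlb _ hli
      refine ⟨(b i : Fin N → ℝ), ?_, hLb i⟩
      intro h0
      exact b.orthonormal.ne_zero i (by ext j; exact congrFun h0 j)
    exact mul_le_mul_of_nonneg_right hge (sq_nonneg _)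

/-- For the Laplacian L̂ of a connected undirected graph with smallest nonzero
    eigenvalue λ₂: for any entrywise positive ξ and nonzero x with ξᵀx = 0,
    (xᵀ L̂ x)/(xᵀ x) > λ₂ / N. -/
theorem rayleigh_quotient_bound (N : ℕ) (hN : 0 < N)
    (Lhat : Matrix (Fin N) (Fin N) ℝ)
    (hsym : Lhat.IsSymm) (hpsd : Lhat.PosSemidef)
    (hrow : Lhat *ᵥ (fun _ => (1 : ℝ)) = 0)
    (hoff : ∀ i j, i ≠ j → Lhat i j ≤ 0)
    (hrank : Lhat.rank = N - 1)
    (lam2 : ℝ)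
    (hlam : IsLeast {μ : ℝ | μ ≠ 0 ∧ ∃ x : Fin N → ℝ, x ≠ 0 ∧ Lhat *ᵥ x = μ • x} lam2)
    (ξ x : Fin N → ℝ) (hξ : ∀ i, 0 < ξ i) (hx : x ≠ 0) (hperp : ξ ⬝ᵥ x = 0) :
    lam2 / N < (x ⬝ᵥ (Lhat *ᵥ x)) / (x ⬝ᵥ x) := by
  classical
  obtain ⟨⟨hl2ne, v0, hv0ne, hv0eig⟩, hlb⟩ := hlam
  have hNR : (0 : ℝ) < N := Nat.cast_pos.mpr hN
  have hNne : (N : ℝ) ≠ 0 := ne_of_gt hNR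
  -- positivity of dot products with self
  have hself : ∀ v : Fin N → ℝ, v ≠ 0 → 0 < v ⬝ᵥ v := by
    intro v hv
    have h1 : 0 ≤ v ⬝ᵥ v := Finset.sum_nonneg fun i _ => mul_self_nonneg _
    rcases h1.lt_or_eq with h | h
    · exact h
    · exact absurd ((dotProduct_self_eq_zero).mp h.symm) hv
  -- lam2 > 0
  have hl2pos : 0 < lam2 := by
    have h0 : 0 ≤ v0 ⬝ᵥ (Lhat *ᵥ v0) := by
      have := hpsd.re_dotProduct_nonneg v0
      simpa using this
    rw [hv0eig, dotProduct_smul, smul_eq_mul] at h0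
    have ht := hself v0 hv0ne
    have hnn : 0 ≤ lam2 := by
      by_contra hneg
      push_neg at hneg
      nlinarith
    exact hnn.lt_of_ne (Ne.symm hl2ne)
  -- N ≥ 2
  have hN2 : 2 ≤ N := by
    by_contra h
    push_neg at h
    have hN1 : N = 1 := by omega
    subst hN1
    apply hx
    have h1 : ξ ⟨0, hN⟩ * x ⟨0, hN⟩ = 0 := by
      simpa [dotProduct, Fin.sum_univ_one] using hperp
    have hx0 : x ⟨0, hN⟩ = 0 := by
      rcases mul_eq_zero.mp h1 with h | h
      · exact absurd h (ne_of_gt (hξ _))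
      · exact h
    funext i
    have hi : i = ⟨0, hN⟩ := Subsingleton.elim _ _
    rw [hi, hx0]; rfl
  -- symmetry helper
  have hvecMul : ∀ v : Fin N → ℝ, v ᵥ* Lhat = Lhat *ᵥ v := by
    intro v
    rw [← hsym.eq, vecMul_transpose, hsym.eq]
  -- kernel is constants
  have hker : ∀ v : Fin N → ℝ, Lhat *ᵥ v = 0 → ∃ c : ℝ, v = fun _ => c := by
    intro v hv
    have h1ne : (fun _ => (1:ℝ) : Fin N → ℝ) ≠ 0 := by
      intro h
      have := congrFun h ⟨0, hN⟩
      simpa using this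
    have h1mem : (fun _ => (1:ℝ) : Fin N → ℝ) ∈ LinearMap.ker Lhat.mulVecLin := by
      simpa [Matrix.mulVecLin_apply] using hrow
    have hrn := LinearMap.finrank_range_add_finrank_ker Lhat.mulVecLin
    have hfr : Module.finrank ℝ (LinearMap.range Lhat.mulVecLin) = N - 1 := hrank
    have hfp : Module.finrank ℝ (Fin N → ℝ) = N := by simp
    have hkd : Module.finrank ℝ (LinearMap.ker Lhat.mulVecLin) = 1 := by
      rw [hfr, hfp] at hrn
      omega
    have hspan : Submodule.span ℝ {(fun _ => (1:ℝ) : Fin N → ℝ)} = LinearMap.ker Lhat.mulVecLin := by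
      apply Submodule.eq_of_le_of_finrank_le
      · rw [Submodule.span_le, Set.singleton_subset_iff]
        exact h1mem
      · rw [hkd, finrank_span_singleton h1ne]
    have hvmem : v ∈ Submodule.span ℝ {(fun _ => (1:ℝ) : Fin N → ℝ)} := by
      rw [hspan]
      simpa [Matrix.mulVecLin_apply] using hv
    obtain ⟨a, ha⟩ := Submodule.mem_span_singleton.mp hvmem
    exact ⟨a, by rw [← ha]; funext i; simp⟩
  -- decomposition
  set S : ℝ := ∑ i, ξ i with hSdef
  have hS : 0 < S := Finset.sum_pos (fun i _ => hξ i) ⟨⟨0, hN⟩, Finset.mem_univ _⟩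
  set c : ℝ := (∑ i, x i) / N with hcdef
  set y : Fin N → ℝ := fun i => x i - c with hydef
  have hy : ∑ i, y i = 0 := by
    simp only [hydef, Finset.sum_sub_distrib, Finset.sum_const, Finset.card_univ,
      Fintype.card_fin, nsmul_eq_mul, hcdef]
    field_simp
    ring
  have hyne : y ≠ 0 := by
    intro h
    have hxc : ∀ i, x i = c := by
      intro i
      have := congrFun h i
      simp only [hydef, Pi.zero_apply] at this
      linarith
    have h0 : S * c = 0 := by
      have heq : ξ ⬝ᵥ x = S * c := by
        simp only [dotProduct, hxc, hSdef]
        rw [← Finset.sum_mul]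
      rw [← heq]
      exact hperp
    have hc0 : c = 0 := by
      rcases mul_eq_zero.mp h0 with h' | h'
      · exact absurd h' (ne_of_gt hS)
      · exact h'
    apply hx
    funext i
    rw [hxc i, hc0]; rfl
  set P : ℝ := y ⬝ᵥ y with hPdef
  have hP : 0 < P := hself y hyne
  -- Lhat x = Lhat y and quadratic forms agree
  have hxy : x = fun i => y i + c := by funext i; simp [hydef]
  have hLxy : Lhat *ᵥ x = Lhat *ᵥ y := by
    have : x = y + c • (fun _ => (1:ℝ)) := by
      funext i; simp [hxy]
    rw [this, mulVec_add, mulVec_smul, hrow, smul_zero, add_zero]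
  have hone : (fun _ => (1:ℝ) : Fin N → ℝ) ⬝ᵥ (Lhat *ᵥ y) = 0 := by
    rw [dotProduct_mulVec, hvecMul, hrow, zero_dotProduct]
  have hquad : x ⬝ᵥ (Lhat *ᵥ x) = y ⬝ᵥ (Lhat *ᵥ y) := by
    rw [hLxy]
    have : x ⬝ᵥ (Lhat *ᵥ y) = y ⬝ᵥ (Lhat *ᵥ y) + c * ((fun _ => (1:ℝ)) ⬝ᵥ (Lhat *ᵥ y)) := by
      rw [hxy]
      simp [dotProduct, Finset.mul_sum, add_mul, Finset.sum_add_distrib]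
    rw [this, hone, mul_zero, add_zero]
  -- norms
  have hxx : x ⬝ᵥ x = P + N * c ^ 2 := by
    rw [hxy]
    simp only [dotProduct, hPdef, hydef]
    have : ∀ i, (x i - c + c) * (x i - c + c) = (x i - c) * (x i - c) + 2 * c * (x i - c) + c ^ 2 := by
      intro i; ring
    rw [Finset.sum_congr rfl fun i _ => this i]
    rw [Finset.sum_add_distrib, Finset.sum_add_distrib, ← Finset.mul_sum]
    have hy' : ∑ i, (x i - c) = 0 := hy
    rw [hy', mul_zero, add_zero, Finset.sum_const, Finset.card_univ, Fintype.card_fin,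
      nsmul_eq_mul]
  -- Cauchy-Schwarz bound: N * c^2 < (N-1) * P
  have hcS : c * S = -(ξ ⬝ᵥ y) := by
    have : ξ ⬝ᵥ x = ξ ⬝ᵥ y + c * S := by
      rw [hxy]
      simp [dotProduct, hSdef, Finset.mul_sum, mul_add, Finset.sum_add_distrib]
      exact Finset.sum_congr rfl fun i _ => by ring
    rw [hperp] at this
    linarith
  have hcs2 : (c * S) ^ 2 ≤ ((∑ i, ξ i ^ 2) - S ^ 2 / N) * P := by
    have key : ∑ i, (ξ i - S / N) * y i = -(c * S) := by
      rw [hcS, neg_neg]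
      simp only [sub_mul, Finset.sum_sub_distrib, ← Finset.mul_sum, hy, mul_zero, sub_zero]
      rfl
    have cz := Finset.sum_mul_sq_le_sq_mul_sq Finset.univ (fun i => ξ i - S / N) y
    have hv : ∑ i, (ξ i - S / N) ^ 2 = (∑ i, ξ i ^ 2) - S ^ 2 / N := by
      have : ∀ i, (ξ i - S / N) ^ 2 = ξ i ^ 2 - 2 * (S / N) * ξ i + (S / N) ^ 2 := by
        intro i; ring
      rw [Finset.sum_congr rfl fun i _ => this i, Finset.sum_add_distrib,
        Finset.sum_sub_distrib, ← Finset.mul_sum, ← hSdef, Finset.sum_const,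
        Finset.card_univ, Fintype.card_fin, nsmul_eq_mul]
      field_simp
      ring
    calc (c * S) ^ 2 = (∑ i, (ξ i - S / N) * y i) ^ 2 := by rw [key]; ring
      _ ≤ (∑ i, (ξ i - S / N) ^ 2) * (∑ i, y i ^ 2) := cz
      _ = ((∑ i, ξ i ^ 2) - S ^ 2 / N) * P := by
          rw [hv, hPdef]
          congr 1
          simp [dotProduct, sq]
  have hstrict : ∑ i, ξ i ^ 2 < S ^ 2 := by
    have hlt : ∀ i : Fin N, ξ i < S := by
      intro i
      have : ∃ j : Fin N, j ≠ i := by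
        by_cases h : (i : ℕ) = 0
        · exact ⟨⟨1, by omega⟩, by intro he; rw [← he] at h; simp at h⟩
        · exact ⟨⟨0, by omega⟩, by intro he; rw [← he] at h; simp at h⟩
      obtain ⟨j, hj⟩ := this
      exact Finset.single_lt_sum hj (Finset.mem_univ i) (Finset.mem_univ j) (hξ j)
        (fun k _ _ => (hξ k).le)
    have h1 : ∀ i : Fin N, ξ i ^ 2 < ξ i * S := by
      intro i
      rw [sq]
      exact mul_lt_mul_of_pos_left (hlt i) (hξ i)
    calc ∑ i, ξ i ^ 2 < ∑ i, ξ i * S :=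
          Finset.sum_lt_sum_of_nonempty ⟨⟨0, hN⟩, Finset.mem_univ _⟩ (fun i _ => h1 i)
      _ = S ^ 2 := by rw [← Finset.sum_mul, ← hSdef, sq]
  have hNc2 : N * c ^ 2 < (N - 1) * P := by
    have h1 : (c * S) ^ 2 < (S ^ 2 - S ^ 2 / N) * P := by
      calc (c * S) ^ 2 ≤ ((∑ i, ξ i ^ 2) - S ^ 2 / N) * P := hcs2
        _ < (S ^ 2 - S ^ 2 / N) * P := by
            apply mul_lt_mul_of_pos_right _ hP
            linarith
    have hS2 : (0:ℝ) < S ^ 2 := by positivity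
    have h2 : c ^ 2 * S ^ 2 < S ^ 2 * ((1 - 1 / N) * P) := by
      calc c ^ 2 * S ^ 2 = (c * S) ^ 2 := by ring
        _ < (S ^ 2 - S ^ 2 / N) * P := h1
        _ = S ^ 2 * ((1 - 1 / N) * P) := by
            first
            | (field_simp; ring)
            | field_simp
    have h3 : c ^ 2 < (1 - 1 / N) * P := by
      have := (mul_lt_mul_iff_right₀ hS2).mp (by linarith : S ^ 2 * c ^ 2 < S ^ 2 * ((1 - 1/N) * P))
      exact this
    have h4 : (N:ℝ) * c ^ 2 < N * ((1 - 1 / N) * P) := by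
      exact mul_lt_mul_of_pos_left h3 hNR
    calc (N:ℝ) * c ^ 2 < N * ((1 - 1/N) * P) := h4
      _ = (N - 1) * P := by
        first
        | (field_simp; ring)
        | field_simp
  have hxxlt : x ⬝ᵥ x < N * P := by
    rw [hxx]; linarith
  -- spectral bound
  have hspec : lam2 * P ≤ x ⬝ᵥ (Lhat *ᵥ x) := by
    rw [hquad, hPdef]
    exact spectral_bound_aux N Lhat hpsd.1 lam2
      (fun μ hμ ⟨w, hw, hwe⟩ => hlb ⟨hμ, w, hw, hwe⟩) hker y hy
  -- conclude
  have hxxpos : 0 < x ⬝ᵥ x := hself x hx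
  have hl2P : 0 < lam2 * P := mul_pos hl2pos hP
  calc lam2 / N = (lam2 * P) / (N * P) := by
        rw [mul_div_mul_right _ _ (ne_of_gt hP)]
    _ < (lam2 * P) / (x ⬝ᵥ x) := div_lt_div_of_pos_left hl2P hxxpos hxxlt
    _ ≤ (x ⬝ᵥ (Lhat *ᵥ x)) / (x ⬝ᵥ x) := (div_le_div_iff_of_pos_right hxxpos).mpr hspec
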